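/- Token rings are rotation-symmetric: let P be a process template, n ≥ 2, let ∀k.ass(k) be a 1-indexed LTL assumption over the inputs and outputs of a single process, and let ψ(i,j) be an LTL\X formula over the outputs of two processes. Then for all indices i ≠ j in {0,…,n−1}, the fully asynchronous token ring P^{R(n)} has a run satisfying ∀k.ass(k) and ψ(i,j) if and only if it has a run satisfying ∀k.ass(k) and ψ(0, j ⊖ i), where ⊖ denotes subtraction modulo n. -/

import Mathlib

/-! ## Deeply embedded LTL -/

/-- LTL formulas over atomic propositions of type `α`. -/
inductive LTL (α : Type) : Type
  | tru : LTL α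
  | atom : α → LTL α
  | neg : LTL α → LTL α
  | conj : LTL α → LTL α → LTL α
  | next : LTL α → LTL α
  | untl : LTL α → LTL α → LTL α

namespace LTL

/-- Satisfaction of an LTL formula at position `k` of the infinite word `w`
(a word assigns to each position the set of atomic propositions holding there). -/
def Sat {α : Type} (w : ℕ → α → Prop) : LTL α → ℕ → Prop
  | tru, _ => True
  | atom a, k => w k a
  | neg φ, k => ¬ Sat w φ k
  | conj φ ψ, k => Sat w φ k ∧ Sat w ψ k
  | next φ, k => Sat w φ (k + 1)
  | untl φ ψ, k => ∃ m, k ≤ m ∧ Sat w ψ m ∧ ∀ l, k ≤ l → l < m → Sat w φ l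

/-- `LTL\X` : formulas not using the next-time operator. -/
def NoNext {α : Type} : LTL α → Prop
  | tru => True
  | atom _ => True
  | neg φ => NoNext φ
  | conj φ ψ => NoNext φ ∧ NoNext ψ
  | next _ => False
  | untl φ ψ => NoNext φ ∧ NoNext ψ

/-- Implication, as a derived connective. -/
def imp {α : Type} (φ ψ : LTL α) : LTL α := neg (conj φ (neg ψ))

/-- "Eventually" (◇). -/
def ev {α : Type} (φ : LTL α) : LTL α := untl tru φ

/-- "Always" (□). -/
def alw {α : Type} (φ : LTL α) : LTL α := neg (ev (neg φ))

end LTL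

/-- Boolean (propositional) formulas over atoms of type `α`. -/
inductive PropForm (α : Type) : Type
  | tru : PropForm α
  | atom : α → PropForm α
  | neg : PropForm α → PropForm α
  | conj : PropForm α → PropForm α → PropForm α

/-- A propositional formula over input variables, seen as an LTL formula over
output-or-input atoms (inputs are injected on the right). -/
def PropForm.toLTL {O I : Type} : PropForm I → LTL (O ⊕ I)
  | .tru => .tru
  | .atom a => .atom (Sum.inr a)
  | .neg p => .neg p.toLTL
  | .conj p q => .conj p.toLTL q.toLTL

/-! ## Process templates and token rings -/

/-- The ring successor `v ⊕ 1` of a vertex of the ring `R(n)`. -/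
def ringSucc {n : ℕ} (v : Fin n) : Fin n :=
  ⟨(v.val + 1) % n, Nat.mod_lt _ (Nat.lt_of_le_of_lt (Nat.zero_le _) v.isLt)⟩

/-- The raw data of a process: token states, output labelling, the two initial
states (with/without token) and the transition relation, over output variables `O`
and input variables `I` (an input letter is a set of input variables). -/
structure RawProc (Q O I : Type) : Type where
  tok : Q → Prop
  lam : Q → O → Prop
  iotaT : Q
  iotaN : Q
  delta : Q → (I → Prop) → Q → Prop

namespace RawProc

variable {Q O I : Type}

/-- Internal transition of the token ring: the processes in `M` simultaneously take
transitions, none of them sends (`snd`) or receives (`rcv`) the token, all others keep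
their state. -/
def internalStep (P : RawProc Q O I) (snd : O) (rcv : I) {n : ℕ} (M : Set (Fin n))
    (s : Fin n → Q) (inp : Fin n → I → Prop) (s' : Fin n → Q) : Prop :=
  (∀ v ∈ M, ¬ P.lam (s v) snd ∧ ¬ inp v rcv ∧ P.delta (s v) (inp v) (s' v)) ∧
    ∀ v, v ∉ M → s' v = s v

/-- Token-passing transition with sender `v`: `v ∈ M` is the only process of `M`
outputting `snd`, its ring successor is in `M` and is the only process of `M` reading
`rcv`; all processes of `M` take transitions, all others keep their state. -/
def tokenStepFrom (P : RawProc Q O I) (snd : O) (rcv : I) {n : ℕ} (v : Fin n)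
    (M : Set (Fin n)) (s : Fin n → Q) (inp : Fin n → I → Prop) (s' : Fin n → Q) : Prop :=
  v ∈ M ∧ ringSucc v ∈ M ∧
  P.lam (s v) snd ∧ (∀ u ∈ M, u ≠ v → ¬ P.lam (s u) snd) ∧
  inp (ringSucc v) rcv ∧ (∀ u ∈ M, u ≠ ringSucc v → ¬ inp u rcv) ∧
  (∀ u ∈ M, P.delta (s u) (inp u) (s' u)) ∧
  ∀ u, u ∉ M → s' u = s u

/-- Global transition of the *fully asynchronous* token ring. -/
def asyncStep (P : RawProc Q O I) (snd : O) (rcv : I) {n : ℕ} (M : Set (Fin n))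
    (s : Fin n → Q) (inp : Fin n → I → Prop) (s' : Fin n → Q) : Prop :=
  P.internalStep snd rcv M s inp s' ∨ ∃ v, P.tokenStepFrom snd rcv v M s inp s'

/-- Global transition of the *interleaving* token ring: exactly one process takes an
internal transition, or one process passes the token to its ring successor. -/
def interleavingStep (P : RawProc Q O I) (snd : O) (rcv : I) {n : ℕ} (M : Set (Fin n))
    (s : Fin n → Q) (inp : Fin n → I → Prop) (s' : Fin n → Q) : Prop :=
  (∃ v : Fin n, M = {v} ∧ P.internalStep snd rcv M s inp s') ∨
  (∃ v : Fin n, M = {v, ringSucc v} ∧ P.tokenStepFrom snd rcv v M s inp s')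

/-- Global transition of the *synchronous* token ring: all processes move. -/
def syncStep (P : RawProc Q O I) (snd : O) (rcv : I) {n : ℕ} (M : Set (Fin n))
    (s : Fin n → Q) (inp : Fin n → I → Prop) (s' : Fin n → Q) : Prop :=
  M = Set.univ ∧ P.asyncStep snd rcv M s inp s'

/-- Condition (a): in every sending state the process ignores its inputs —
there is a unique successor, the same for every input letter. -/
def CondA (P : RawProc Q O I) (snd : O) : Prop :=
  ∀ q, P.lam q snd → ∃ q', ∀ (ins : I → Prop) (q'' : Q), P.delta q ins q'' ↔ q'' = q'

/-- The axioms making raw process data a process template (for distinguished output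
`snd` and input `rcv`): the initial states have/lack the token, only token states can
output `snd`, transitions respect the token structure, and the transition relation is
non-terminating. -/
def IsTemplate (P : RawProc Q O I) (snd : O) (rcv : I) : Prop :=
  P.tok P.iotaT ∧ ¬ P.tok P.iotaN ∧
  (∀ q, P.lam q snd → P.tok q) ∧
  (∀ q ins q', P.delta q ins q' →
      (P.tok q → ¬ ins rcv) ∧
      (P.lam q snd → ¬ P.tok q') ∧
      (P.tok q → ¬ P.lam q snd → P.tok q') ∧
      (¬ P.tok q → ins rcv → P.tok q') ∧
      (¬ P.tok q → ¬ ins rcv → ¬ P.tok q')) ∧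
  (∀ q ins, (P.tok q → ¬ ins rcv) → ∃ q', P.delta q ins q')

end RawProc

/-- A process template over output variables `O` (with distinguished `snd`)
and input variables `I` (with distinguished `rcv`): a finite-state labelled
transition system satisfying the token-ring template axioms. -/
structure Template (O I : Type) (snd : O) (rcv : I) : Type 1 where
  Q : Type
  P : RawProc Q O I
  finQ : Finite Q
  ax : P.IsTemplate snd rcv

/-- A process template together with a local fairness condition `A_loc` (over the
input and output variables) and the requirement (†): from every token state, under
any input sequence such that the resulting local input/output sequence satisfies the
fairness condition, the process eventually reaches a state sending the token. -/
structure TemplateF (O I : Type) (snd : O) (rcv : I) extends Template O I snd rcv where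
  fairCond : (ℕ → (I → Prop) × (O → Prop)) → Prop
  tokenLive : ∀ q, P.tok q → ∀ (ins : ℕ → I → Prop) (path : ℕ → Q),
    path 0 = q → (∀ k, P.delta (path k) (ins k) (path (k + 1))) →
    fairCond (fun k => (ins k, P.lam (path k))) → ∃ k, P.lam (path k) snd

/-- The type of global step relations of a ring of `n` processes with state set `Q`
and input variables `I`. -/
abbrev StepRel (Q I : Type) (n : ℕ) : Type :=
  Set (Fin n) → (Fin n → Q) → (Fin n → I → Prop) → (Fin n → Q) → Prop

/-- A run of a token-ring system built from the process `P`, with global inputs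
designated by `isGlob` (global inputs are read identically by all processes),
ring size `n`, and global step relation `R`: an infinite sequence of global states,
input assignments and scheduled sets `M_k`, starting in an initial global state
(each process in one of its initial states, exactly one process having the token). -/
structure SysRun {Q O I : Type} (P : RawProc Q O I) (isGlob : I → Prop) (n : ℕ)
    (R : StepRel Q I n) : Type where
  state : ℕ → Fin n → Q
  inp : ℕ → Fin n → I → Prop
  sched : ℕ → Set (Fin n)
  init_state : ∀ v, state 0 v = P.iotaT ∨ state 0 v = P.iotaN
  init_token : ∃! v, P.tok (state 0 v)
  glob_consistent : ∀ k v w a, isGlob a → (inp k v a ↔ inp k w a)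
  step : ∀ k, R (sched k) (state k) (inp k) (state (k + 1))

namespace SysRun

variable {Q O I : Type} {P : RawProc Q O I} {isGlob : I → Prop} {n : ℕ} {R : StepRel Q I n}

/-- Process `j` makes transitions infinitely often along the run. -/
def MovesInf (x : SysRun P isGlob n R) (j : Fin n) : Prop :=
  {k : ℕ | j ∈ x.sched k}.Infinite

/-- The position (in the run) of the `t`-th transition of process `j`. -/
noncomputable def localIdx (x : SysRun P isGlob n R) (j : Fin n) (t : ℕ) : ℕ :=
  Nat.nth (fun k => j ∈ x.sched k) t

/-- The local run of process `j`, as an infinite word over the atomic propositions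
`O ⊕ I` (outputs and inputs of process `j`): the projection of the run to the
positions where `j` makes a transition. -/
noncomputable def localWord (x : SysRun P isGlob n R) (j : Fin n) : ℕ → O ⊕ I → Prop :=
  fun t => Sum.elim (P.lam (x.state (x.localIdx j t) j)) (x.inp (x.localIdx j t) j)

/-- The local run of process `j` satisfies the LTL formula `φ` over the inputs
and outputs of a single process (vacuously, if `j` moves only finitely often). -/
def LocalSat (x : SysRun P isGlob n R) (φ : LTL (O ⊕ I)) (j : Fin n) : Prop :=
  x.MovesInf j → LTL.Sat (x.localWord j) φ 0

/-- The global output word of the pair of processes `(i, j)`, over the atomic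
propositions `O ⊕ O` (outputs of `i` and of `j`). -/
def outWord2 (x : SysRun P isGlob n R) (i j : Fin n) : ℕ → O ⊕ O → Prop :=
  fun k => Sum.elim (P.lam (x.state k i)) (P.lam (x.state k j))

/-- The run satisfies the 2-indexed formula `ψ(i,j)` (over outputs only),
evaluated on the global output sequence. -/
def Sat2At (x : SysRun P isGlob n R) (ψ : LTL (O ⊕ O)) (i j : Fin n) : Prop :=
  LTL.Sat (x.outWord2 i j) ψ 0

end SysRun

/-- The system satisfies `A_{∀i.ass(i)} ∀j.φ(j)`: every run all of whose local runs
satisfy `ass` has all of its local runs satisfying `φ`. -/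
def SatSpec1 {Q O I : Type} (P : RawProc Q O I) (isGlob : I → Prop) (n : ℕ)
    (R : StepRel Q I n) (ass φ : LTL (O ⊕ I)) : Prop :=
  ∀ x : SysRun P isGlob n R, (∀ i, x.LocalSat ass i) → ∀ j, x.LocalSat φ j

/-- The system satisfies `A_{∀i.ass(i)} ∀i,j.ψ(i,j)`. -/
def SatSpec2 {Q O I : Type} (P : RawProc Q O I) (isGlob : I → Prop) (n : ℕ)
    (R : StepRel Q I n) (ass : LTL (O ⊕ I)) (ψ : LTL (O ⊕ O)) : Prop :=
  ∀ x : SysRun P isGlob n R, (∀ i, x.LocalSat ass i) → ∀ i j, i ≠ j → x.Sat2At ψ i j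

/-- The system satisfies `∀i,j. A ψ(i,j)` (no assumptions). -/
def SatSpec2NoAss {Q O I : Type} (P : RawProc Q O I) (isGlob : I → Prop) (n : ℕ)
    (R : StepRel Q I n) (ψ : LTL (O ⊕ O)) : Prop :=
  ∀ x : SysRun P isGlob n R, ∀ i j, i ≠ j → x.Sat2At ψ i j

section RotationAux

variable {Q O I : Type}

lemma ringSucc_eq_add_one {n : ℕ} [NeZero n] (hn : 2 ≤ n) (v : Fin n) : ringSucc v = v + 1 := by
  rw [Fin.ext_iff]
  simp [ringSucc, Fin.add_def, Fin.val_one', Nat.mod_eq_of_lt (show 1 < n by omega)]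

lemma ringSucc_add {n : ℕ} [NeZero n] (hn : 2 ≤ n) (v d : Fin n) :
    ringSucc (v + d) = ringSucc v + d := by
  rw [ringSucc_eq_add_one hn, ringSucc_eq_add_one hn]
  exact add_right_comm v d 1

/-- Rotate a run of the fully asynchronous token ring by `d`: process `v` of the
rotated run behaves like process `v + d` of the original run. -/
noncomputable def SysRun.rotate {P : RawProc Q O I} {isGlob : I → Prop} {n : ℕ}
    [NeZero n] (hn : 2 ≤ n) (snd : O) (rcv : I)
    (x : SysRun P isGlob n (P.asyncStep snd rcv)) (d : Fin n) :
    SysRun P isGlob n (P.asyncStep snd rcv) where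
  state := fun k v => x.state k (v + d)
  inp := fun k v => x.inp k (v + d)
  sched := fun k => {v | v + d ∈ x.sched k}
  init_state := fun v => x.init_state (v + d)
  init_token := by
    obtain ⟨w, hw, huniq⟩ := x.init_token
    refine ⟨w - d, ?_, fun u hu => ?_⟩
    · show P.tok (x.state 0 (w - d + d))
      rw [sub_add_cancel]; exact hw
    · have h := huniq (u + d) hu
      exact eq_sub_of_add_eq h
  glob_consistent := fun k v w a ha => x.glob_consistent k (v + d) (w + d) a ha
  step := by
    intro k
    rcases x.step k with h | ⟨v, hv⟩
    · left
      exact ⟨fun u hu => h.1 (u + d) hu, fun u hu => h.2 (u + d) hu⟩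
    · right
      refine ⟨v - d, ?_, ?_, ?_, ?_, ?_, ?_, ?_, ?_⟩
      · show v - d + d ∈ x.sched k
        rw [sub_add_cancel]; exact hv.1
      · show ringSucc (v - d) + d ∈ x.sched k
        rw [← ringSucc_add hn, sub_add_cancel]
        exact hv.2.1
      · show P.lam (x.state k (v - d + d)) snd
        rw [sub_add_cancel]; exact hv.2.2.1
      · intro u hu hne
        exact hv.2.2.2.1 (u + d) hu (fun h => hne (eq_sub_of_add_eq h))
      · show x.inp k (ringSucc (v - d) + d) rcv
        rw [← ringSucc_add hn, sub_add_cancel]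
        exact hv.2.2.2.2.1
      · intro u hu hne
        apply hv.2.2.2.2.2.1 (u + d) hu
        intro h
        apply hne
        have h2 : u + d = ringSucc (v - d) + d := by
          rw [← ringSucc_add hn, sub_add_cancel]; exact h
        exact add_right_cancel h2
      · exact fun u hu => hv.2.2.2.2.2.2.1 (u + d) hu
      · exact fun u hu => hv.2.2.2.2.2.2.2 (u + d) hu

end RotationAux

/-- rotation symmetry of token rings: for a process template `P`,
a ring size `n ≥ 2`, a 1-indexed LTL assumption `ass` and an LTL\X formula `ψ(i,j)`
over the outputs of two processes, and indices `i ≠ j`: the fully asynchronous ring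
`P^{R(n)}` has a run satisfying `∀k.ass(k)` and `ψ(i,j)` iff it has a run satisfying
`∀k.ass(k)` and `ψ(0, j ⊖ i)` (subtraction modulo `n`). -/
theorem token_ring_rotation_symmetric
    {O I : Type} (snd : O) (rcv : I) (isGlob : I → Prop)
    (T : Template O I snd rcv) (n : ℕ) (hn : 2 ≤ n)
    (ass : LTL (O ⊕ I)) (ψ : LTL (O ⊕ O)) (hψ : ψ.NoNext)
    (i j : Fin n) (hij : i ≠ j) :
    (∃ x : SysRun T.P isGlob n (T.P.asyncStep snd rcv),
        (∀ k, x.LocalSat ass k) ∧ x.Sat2At ψ i j) ↔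
    (∃ x : SysRun T.P isGlob n (T.P.asyncStep snd rcv),
        (∀ k, x.LocalSat ass k) ∧ x.Sat2At ψ (⟨0, by omega⟩ : Fin n) (j - i)) := by
  haveI : NeZero n := ⟨by omega⟩
  constructor
  · rintro ⟨x, hass, hsat⟩
    refine ⟨x.rotate hn snd rcv i, fun k => hass (k + i), ?_⟩
    have key : (x.rotate hn snd rcv i).Sat2At ψ (⟨0, by omega⟩ : Fin n) (j - i)
        = x.Sat2At ψ ((⟨0, by omega⟩ : Fin n) + i) (j - i + i) := rfl
    have h0 : (⟨0, by omega⟩ : Fin n) = (0 : Fin n) := rfl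
    rw [key, h0, zero_add, sub_add_cancel]
    exact hsat
  · rintro ⟨y, hass, hsat⟩
    refine ⟨y.rotate hn snd rcv (-i), fun k => hass (k + (-i)), ?_⟩
    have key : (y.rotate hn snd rcv (-i)).Sat2At ψ i j
        = y.Sat2At ψ (i + (-i)) (j + (-i)) := rfl
    have h0 : (⟨0, by omega⟩ : Fin n) = (0 : Fin n) := rfl
    rw [key, add_neg_cancel, ← sub_eq_add_neg]
    rw [h0] at hsat
    exact hsat
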